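/- Let G be an invertible p×p real matrix, R a p×p orthogonal matrix, and L = {Rᵀ Gᵀ f : f ∈ ℤ^p}. Suppose ρ ≥ 0 is such that every z ∈ ℝ^p is within Euclidean distance ρ of some point of L. Then for every c ∈ ℝ^p and every t ≥ 2ρ, the number N of points of L lying in the axis-aligned cube c + [−t/2, t/2]^p satisfies (t − 2ρ)^p ≤ N·|det(G)| ≤ (t + 2ρ)^p. -/

import Mathlib

open Matrix MeasureTheory Submodule
open scoped ENNReal


noncomputable def dE (z x : Fin p → ℝ) : ℝ := Real.sqrt (∑ k, (z k - x k)^2)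

def llt (f g : Fin p → ℤ) : Prop := toLex f < toLex g

theorem llt_def (f g : Fin p → ℤ) : llt f g ↔ ∃ i, (∀ j, j < i → f j = g j) ∧ f i < g i := Iff.rfl

theorem llt_shift (f g h : Fin p → ℤ) : llt (f + h) (g + h) ↔ llt f g := by
  simp only [llt_def, Pi.add_apply, add_lt_add_iff_right, add_left_inj]

theorem llt_trichotomy (f g : Fin p → ℤ) : llt f g ∨ f = g ∨ llt g f := by
  have := (Pi.isTrichotomous_lex (β := fun _ : Fin p => ℤ) ((· < ·))
    (@fun _ => (· < ·)) (IsWellFounded.wf (α := Fin p) (r := (· < ·)))).1 f g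
  exact (em (llt f g)).elim Or.inl fun h1 =>
    (em (llt g f)).elim (fun h2 => Or.inr (Or.inr h2)) fun h2 => Or.inr (Or.inl (this h1 h2))

theorem dE_nonneg (z x : Fin p → ℝ) : 0 ≤ dE z x := Real.sqrt_nonneg _

theorem dE_sub (z x w : Fin p → ℝ) : dE (z - w) (x - w) = dE z x := by
  simp [dE, sub_sub_sub_cancel_right]

theorem abs_le_of_dE_le {z x : Fin p → ℝ} {r : ℝ} (h : dE z x ≤ r) (hr : 0 ≤ r) (k : Fin p) :
    |z k - x k| ≤ r := by
  have h1 : (z k - x k)^2 ≤ ∑ j, (z j - x j)^2 :=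
    Finset.single_le_sum (f := fun j => (z j - x j)^2) (fun j _ => sq_nonneg _) (Finset.mem_univ k)
  calc |z k - x k| = Real.sqrt ((z k - x k)^2) := (Real.sqrt_sq_eq_abs _).symm
    _ ≤ Real.sqrt (∑ j, (z j - x j)^2) := Real.sqrt_le_sqrt h1
    _ ≤ r := h

theorem continuous_dE (x : Fin p → ℝ) : Continuous fun z : Fin p → ℝ => dE z x := by
  unfold dE
  exact Real.continuous_sqrt.comp (by continuity)

variable {p : ℕ} (M : Matrix (Fin p) (Fin p) ℝ)

noncomputable def vmap (f : Fin p → ℤ) : Fin p → ℝ := M.mulVec fun i => (f i : ℝ)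

theorem castv (f g : Fin p → ℤ) :
    (fun i => ((f + g) i : ℝ)) = (fun i => (f i : ℝ)) + fun i => (g i : ℝ) := by
  ext i; push_cast; simp

theorem vmap_add (f g : Fin p → ℤ) : vmap M (f + g) = vmap M f + vmap M g := by
  unfold vmap
  rw [castv, Matrix.mulVec_add]

theorem vmap_neg (f : Fin p → ℤ) : vmap M (-f) = -(vmap M f) := by
  unfold vmap
  have : (fun i => ((-f) i : ℝ)) = -(fun i => (f i : ℝ)) := by ext i; push_cast; simp
  rw [this, Matrix.mulVec_neg]

theorem vmap_zero : vmap M 0 = 0 := by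
  unfold vmap
  have : (fun i => ((0 : Fin p → ℤ) i : ℝ)) = 0 := by ext i; simp
  rw [this, Matrix.mulVec_zero]

theorem vmap_injective (hM : IsUnit M.det) : Function.Injective (vmap M) := by
  intro f g h
  have h2 : M.mulVec (fun i => (f i : ℝ)) = M.mulVec (fun i => (g i : ℝ)) := h
  have hinj := Matrix.mulVec_injective_iff_isUnit.mpr ((Matrix.isUnit_iff_isUnit_det M).mpr hM)
  have := hinj h2
  ext i
  exact_mod_cast congrFun this i

noncomputable def latB (hM : IsUnit M.det) : Module.Basis (Fin p) ℝ (Fin p → ℝ) :=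
  (Pi.basisFun ℝ (Fin p)).map
    (Matrix.toLinearEquiv' M (M.invertibleOfIsUnitDet hM))

theorem latB_apply (hM : IsUnit M.det) (i : Fin p) :
    latB M hM i = M.mulVec (Pi.single i 1) := by
  simp [latB, Matrix.toLinearEquiv', Matrix.toLin'_apply]

theorem vmap_eq_sum (hM : IsUnit M.det) (f : Fin p → ℤ) :
    vmap M f = ∑ i, f i • (latB M hM i) := by
  ext j
  rw [Finset.sum_apply]
  have : ∀ i, (f i • (latB M hM i)) j = (f i : ℝ) * M j i := by
    intro i
    rw [latB_apply]
    simp [mulVec_single]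
  rw [Finset.sum_congr rfl (fun i _ => this i)]
  simp [vmap, Matrix.mulVec, dotProduct, mul_comm]

theorem vmap_mem_span (hM : IsUnit M.det) (f : Fin p → ℤ) :
    vmap M f ∈ span ℤ (Set.range (latB M hM)) := by
  rw [vmap_eq_sum M hM]
  exact Submodule.sum_mem _ fun i _ =>
    Submodule.smul_mem _ (f i) (Submodule.subset_span ⟨i, rfl⟩)

theorem span_eq_range_vmap (hM : IsUnit M.det) :
    (span ℤ (Set.range (latB M hM)) : Set (Fin p → ℝ)) = Set.range (vmap M) := by
  apply Set.Subset.antisymm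
  · intro x hx
    induction hx using Submodule.span_induction with
    | mem x hx =>
        obtain ⟨i, rfl⟩ := hx
        refine ⟨Pi.single i 1, ?_⟩
        rw [latB_apply]
        unfold vmap
        have h0 : (fun j => ((Pi.single i 1 : Fin p → ℤ) j : ℝ)) = Pi.single i 1 := by
          ext j
          by_cases h : j = i <;> simp [Pi.single_apply, h]
        rw [h0]
    | zero => exact ⟨0, (vmap_zero M)⟩
    | add x y _ _ hx hy =>
        obtain ⟨f, rfl⟩ := hx; obtain ⟨g, rfl⟩ := hy
        exact ⟨f + g, vmap_add M f g⟩
    | smul n x _ hx =>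
        obtain ⟨f, rfl⟩ := hx
        refine ⟨n • f, ?_⟩
        unfold vmap
        have h1 : (fun i => (((n • f) i : ℤ) : ℝ)) = (n : ℝ) • fun i => (f i : ℝ) := by
          ext i; push_cast; simp [mul_comm]
        rw [h1, Matrix.mulVec_smul, Int.cast_smul_eq_zsmul]
  · rintro x ⟨f, rfl⟩
    exact vmap_mem_span M hM f

theorem lat_finite (hM : IsUnit M.det) {K : Set (Fin p → ℝ)}
    (hK : Bornology.IsBounded K) : {f : Fin p → ℤ | vmap M f ∈ K}.Finite := by
  have h1 : (K ∩ (span ℤ (Set.range (latB M hM)) : Set (Fin p → ℝ))).Finite := by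
    have : DiscreteTopology (span ℤ (Set.range (latB M hM)) : Set (Fin p → ℝ)) := by
      exact inferInstanceAs (DiscreteTopology (span ℤ (Set.range (latB M hM))))
    exact Metric.finite_isBounded_inter_isClosed DiscreteTopology.isDiscrete hK
      (AddSubgroup.isClosed_of_discrete (H := (span ℤ (Set.range (latB M hM))).toAddSubgroup))
  have h2 : {f : Fin p → ℤ | vmap M f ∈ K} ⊆
      vmap M ⁻¹' (K ∩ (span ℤ (Set.range (latB M hM)) : Set (Fin p → ℝ))) := by
    intro f hf
    exact ⟨hf, vmap_mem_span M hM f⟩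
  exact Set.Finite.subset (Set.Finite.preimage (Set.injOn_of_injective (vmap_injective M hM)) h1) h2

def ASet (f : Fin p → ℤ) : Set (Fin p → ℝ) :=
  {z | (∀ g, dE z (vmap M f) ≤ dE z (vmap M g)) ∧
    ∀ g, dE z (vmap M g) = dE z (vmap M f) → ¬ llt g f}

theorem ASet_disjoint {f g : Fin p → ℤ} {z : Fin p → ℝ}
    (hf : z ∈ ASet M f) (hg : z ∈ ASet M g) : f = g := by
  have heq : dE z (vmap M g) = dE z (vmap M f) := le_antisymm (hg.1 f) (hf.1 g)
  rcases llt_trichotomy f g with h | h | h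
  · exact absurd h (hg.2 f heq.symm)
  · exact h
  · exact absurd h (hf.2 g heq)

theorem measurableSet_ASet (f : Fin p → ℤ) : MeasurableSet (ASet M f) := by
  have : ASet M f = (⋂ g, {z | dE z (vmap M f) ≤ dE z (vmap M g)}) ∩
      (⋂ g, {z | dE z (vmap M g) = dE z (vmap M f) → ¬ llt g f}) := by
    ext z
    simp only [ASet, Set.mem_setOf_eq, Set.mem_inter_iff, Set.mem_iInter]
  rw [this]
  refine MeasurableSet.inter (MeasurableSet.iInter fun g => ?_) (MeasurableSet.iInter fun g => ?_)
  · exact (isClosed_le (continuous_dE _) (continuous_dE _)).measurableSet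
  · by_cases h : llt g f
    · have : {z : Fin p → ℝ | dE z (vmap M g) = dE z (vmap M f) → ¬ llt g f}
          = {z : Fin p → ℝ | dE z (vmap M g) = dE z (vmap M f)}ᶜ := by
        ext z; simp [h]
      rw [this]
      exact ((isClosed_eq (continuous_dE _) (continuous_dE _)).measurableSet).compl
    · have : {z : Fin p → ℝ | dE z (vmap M g) = dE z (vmap M f) → ¬ llt g f} = Set.univ := by
        ext z; simp [h]
      rw [this]
      exact MeasurableSet.univ

theorem exists_mem_ASet (hM : IsUnit M.det) {ρ : ℝ}
    (hcov : ∀ z : Fin p → ℝ, ∃ f : Fin p → ℤ, dE z (vmap M f) ≤ ρ) (z : Fin p → ℝ) :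
    ∃ f, z ∈ ASet M f := by
  classical
  set T : Set (Fin p → ℤ) := {g | dE z (vmap M g) ≤ ρ} with hT
  have hρ0 : 0 ≤ ρ := le_trans (dE_nonneg _ _) (hcov z).choose_spec
  have hTne : T.Nonempty := ⟨(hcov z).choose, (hcov z).choose_spec⟩
  have hTfin : T.Finite := by
    refine lat_finite M hM (K := {x | dE z x ≤ ρ}) ?_
    refine Bornology.IsBounded.subset (Metric.isBounded_closedBall (x := z) (r := ρ)) ?_
    intro x hx
    rw [Metric.mem_closedBall, dist_pi_le_iff hρ0]
    intro k
    rw [Real.dist_eq, abs_sub_comm]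
    exact abs_le_of_dE_le hx hρ0 k
  obtain ⟨a, haT, ha⟩ := Set.exists_min_image T (fun g => dE z (vmap M g)) hTfin hTne
  have hmin : ∀ g, dE z (vmap M a) ≤ dE z (vmap M g) := by
    intro g
    by_cases hg : g ∈ T
    · exact ha g hg
    · have : ρ < dE z (vmap M g) := lt_of_not_ge hg
      exact le_trans haT this.le
  set T' : Set (Fin p → ℤ) := {g | dE z (vmap M g) = dE z (vmap M a)} with hT'
  have hT'sub : T' ⊆ T := fun g hg => hg.le.trans haT
  have hT'fin : T'.Finite := hTfin.subset hT'sub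
  obtain ⟨b, hbT', hb⟩ := Set.Finite.exists_minimalFor toLex T' hT'fin ⟨a, rfl⟩
  refine ⟨b, ?_, ?_⟩
  · intro g
    rw [hbT']
    exact hmin g
  · intro g hg hlt
    have hgT' : g ∈ T' := by rw [hT', Set.mem_setOf_eq, hg, hbT']
    have heq : toLex b = toLex g := le_antisymm (hb hgT' (le_of_lt hlt)) (le_of_lt hlt)
    have hlt' : toLex g < toLex b := hlt
    rw [heq] at hlt'
    exact lt_irrefl _ hlt'

theorem dE_vmap_sub (z : Fin p → ℝ) (f g : Fin p → ℤ) :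
    dE (z - vmap M f) (vmap M g) = dE z (vmap M (g + f)) := by
  conv_lhs => rw [show vmap M g = vmap M (g + f) - vmap M f by rw [vmap_add]; ring]
  rw [dE_sub]

theorem ASet_shift (z : Fin p → ℝ) (f : Fin p → ℤ) :
    z ∈ ASet M f ↔ z - vmap M f ∈ ASet M 0 := by
  have key : ∀ g, dE (z - vmap M f) (vmap M g) = dE z (vmap M (g + f)) := dE_vmap_sub M z f
  constructor
  · rintro ⟨h1, h2⟩
    refine ⟨fun g => ?_, fun g hg => ?_⟩
    · rw [key, key, zero_add]
      exact h1 (g + f)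
    · rw [key, key, zero_add] at hg
      have := h2 (g + f) hg
      intro hlt
      refine this ?_
      have h4 := (llt_shift g 0 f).mpr hlt
      rwa [zero_add] at h4
  · rintro ⟨h1, h2⟩
    refine ⟨fun g => ?_, fun g hg => ?_⟩
    · have := h1 (g - f)
      rw [key, key, zero_add, sub_add_cancel] at this
      exact this
    · have h3 := h2 (g - f)
      rw [key, key, zero_add, sub_add_cancel] at h3
      have := h3 hg
      intro hlt
      refine this ?_
      have : llt (g - f + f) (0 + f) → llt (g - f) 0 := (llt_shift _ _ f).mp
      rw [sub_add_cancel, zero_add] at this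
      exact this hlt

theorem ASet_isAddFundamentalDomain (hM : IsUnit M.det) {ρ : ℝ}
    (hcov : ∀ z : Fin p → ℝ, ∃ f : Fin p → ℤ, dE z (vmap M f) ≤ ρ) :
    IsAddFundamentalDomain (span ℤ (Set.range (latB M hM))).toAddSubgroup
      (ASet M 0) (volume : Measure (Fin p → ℝ)) := by
  refine IsAddFundamentalDomain.mk' ((measurableSet_ASet M 0).nullMeasurableSet) fun x => ?_
  obtain ⟨f, hf⟩ := exists_mem_ASet M hM hcov x
  have hmem : vmap M (-f) ∈ (span ℤ (Set.range (latB M hM))).toAddSubgroup :=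
    vmap_mem_span M hM (-f)
  refine ⟨⟨vmap M (-f), hmem⟩, ?_, ?_⟩
  · show vmap M (-f) + x ∈ ASet M 0
    have : vmap M (-f) + x = x - vmap M f := by rw [vmap_neg]; ring
    rw [this]
    exact (ASet_shift M x f).mp hf
  · rintro ⟨g, hg⟩ hgx
    have hrange : g ∈ Set.range (vmap M) := by
      rw [← span_eq_range_vmap M hM]; exact hg
    obtain ⟨h, rfl⟩ := hrange
    have : vmap M h + x ∈ ASet M 0 := hgx
    have hx2 : x ∈ ASet M (-h) := by
      rw [ASet_shift M x (-h), vmap_neg, sub_neg_eq_add, add_comm]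
      exact this
    have := ASet_disjoint M hx2 hf
    apply Subtype.ext
    show vmap M h = vmap M (-f)
    rw [← this]
    simp

theorem volume_ASet_zero (hM : IsUnit M.det) {ρ : ℝ}
    (hcov : ∀ z : Fin p → ℝ, ∃ f : Fin p → ℤ, dE z (vmap M f) ≤ ρ) :
    volume (ASet M 0) = ENNReal.ofReal |M.det| := by
  classical
  have h1 := ASet_isAddFundamentalDomain M hM hcov
  have h2 := ZSpan.isAddFundamentalDomain' (latB M hM) (volume : Measure (Fin p → ℝ))
  have hc : Countable ((span ℤ (Set.range (latB M hM))).toAddSubgroup) := by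
    have hcs : ((span ℤ (Set.range (latB M hM)) : Submodule ℤ (Fin p → ℝ)) : Set (Fin p → ℝ)).Countable := by
      rw [span_eq_range_vmap M hM]
      exact Set.countable_range _
    exact hcs.to_subtype
  have h3 := h1.measure_eq h2
  rw [h3, ZSpan.volume_fundamentalDomain]
  congr 2
  rw [show (Matrix.of ⇑(latB M hM)) = Mᵀ by
    ext i j
    simp [latB_apply, mulVec_single, Matrix.transpose_apply]]
  exact Matrix.det_transpose M

theorem volume_ASet (hM : IsUnit M.det) {ρ : ℝ}
    (hcov : ∀ z : Fin p → ℝ, ∃ f : Fin p → ℤ, dE z (vmap M f) ≤ ρ) (f : Fin p → ℤ) :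
    volume (ASet M f) = ENNReal.ofReal |M.det| := by
  have hpre : ASet M f = (fun z => z + (-(vmap M f))) ⁻¹' (ASet M 0) := by
    ext z
    rw [Set.mem_preimage, ← sub_eq_add_neg]
    exact ASet_shift M z f
  rw [hpre, measure_preimage_add_right, volume_ASet_zero M hM hcov]

/-- If `ρ` bounds the covering radius of the lattice `L = {Rᵀ Gᵀ f : f ∈ ℤ^p}`, then the
number `N` of lattice points in any axis-aligned cube of side `t ≥ 2ρ` satisfies
`(t - 2ρ)^p ≤ N |det G| ≤ (t + 2ρ)^p`. -/
theorem lattice_points_in_cube_count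
    (p : ℕ) (hp : 1 ≤ p)
    (G R : Matrix (Fin p) (Fin p) ℝ) (hG : IsUnit G.det) (hR : Rᵀ * R = 1)
    (ρ : ℝ) (hρ : 0 ≤ ρ)
    (hcov : ∀ z : Fin p → ℝ, ∃ f : Fin p → ℤ,
      Real.sqrt (∑ k, (z k - (Rᵀ * Gᵀ).mulVec (fun i => (f i : ℝ)) k) ^ 2) ≤ ρ)
    (c : Fin p → ℝ) (t : ℝ) (ht : 2 * ρ ≤ t)
    (N : ℕ)
    (hN : N = Set.ncard {x : Fin p → ℝ |
      (∃ f : Fin p → ℤ, x = (Rᵀ * Gᵀ).mulVec (fun i => (f i : ℝ))) ∧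
      ∀ k, x k ∈ Set.Icc (c k - t / 2) (c k + t / 2)}) :
    (t - 2 * ρ) ^ p ≤ (N : ℝ) * |G.det| ∧ (N : ℝ) * |G.det| ≤ (t + 2 * ρ) ^ p := by
  classical
  set M : Matrix (Fin p) (Fin p) ℝ := Rᵀ * Gᵀ with hMdef
  -- basic facts
  have hdetR : |R.det| = 1 := by
    have h1 : R.det * R.det = 1 := by
      have := congrArg Matrix.det hR
      rwa [Matrix.det_mul, Matrix.det_transpose, Matrix.det_one] at this
    rcases mul_self_eq_one_iff.mp h1 with h | h <;> rw [h] <;> norm_num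
  have hM : IsUnit M.det := by
    rw [hMdef, Matrix.det_mul, Matrix.det_transpose, Matrix.det_transpose]
    refine IsUnit.mul ?_ hG
    rw [isUnit_iff_ne_zero]
    intro h0
    rw [h0] at hdetR
    norm_num at hdetR
  have hdetM : |M.det| = |G.det| := by
    rw [hMdef, Matrix.det_mul, Matrix.det_transpose, Matrix.det_transpose, abs_mul, hdetR, one_mul]
  have hcov' : ∀ z : Fin p → ℝ, ∃ f : Fin p → ℤ, dE z (vmap M f) ≤ ρ := hcov
  have ht0 : 0 ≤ t := le_trans (by linarith) ht
  have htm : 0 ≤ t - 2 * ρ := by linarith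
  have htp : 0 ≤ t + 2 * ρ := by linarith
  -- the set of relevant lattice vectors
  set S : Set (Fin p → ℤ) :=
    {f | ∀ k, vmap M f k ∈ Set.Icc (c k - t / 2) (c k + t / 2)} with hSdef
  have hSfin : S.Finite := by
    refine lat_finite M hM (K := Metric.closedBall c (t / 2)) ?_ |>.subset ?_
    · exact Metric.isBounded_closedBall
    · intro f hf
      rw [Set.mem_setOf_eq, Metric.mem_closedBall, dist_pi_le_iff (by linarith)]
      intro k
      have := hf k
      rw [Set.mem_Icc] at this
      rw [Real.dist_eq, abs_le]
      constructor <;> linarith [this.1, this.2]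
  -- N is the cardinality of S
  have hNcard : N = hSfin.toFinset.card := by
    rw [hN]
    have himg : {x : Fin p → ℝ |
        (∃ f : Fin p → ℤ, x = (Rᵀ * Gᵀ).mulVec (fun i => (f i : ℝ))) ∧
        ∀ k, x k ∈ Set.Icc (c k - t / 2) (c k + t / 2)} = vmap M '' S := by
      ext x
      simp only [Set.mem_setOf_eq, Set.mem_image]
      constructor
      · rintro ⟨⟨f, rfl⟩, h2⟩
        exact ⟨f, h2, rfl⟩
      · rintro ⟨f, hf, rfl⟩
        exact ⟨⟨f, rfl⟩, hf⟩
    rw [himg, Set.ncard_image_of_injective _ (vmap_injective M hM),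
      Set.ncard_eq_toFinset_card S hSfin]
  -- each point of ASet f is within ρ of vmap f
  have key1 : ∀ (z : Fin p → ℝ) (f : Fin p → ℤ), z ∈ ASet M f → dE z (vmap M f) ≤ ρ := by
    intro z f hz
    obtain ⟨g, hg⟩ := hcov' z
    exact le_trans (hz.1 g) hg
  set T : Finset (Fin p → ℤ) := hSfin.toFinset with hTdef
  -- volume of each ASet
  have hvol : ∀ f, volume (ASet M f) = ENNReal.ofReal |G.det| := by
    intro f
    rw [volume_ASet M hM hcov' f, hdetM]
  -- lower bound
  have hlow : ENNReal.ofReal ((t - 2*ρ)^p) ≤ (N : ℝ≥0∞) * ENNReal.ofReal |G.det| := by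
    have hsub : (Set.pi Set.univ fun k => Set.Icc (c k - (t - 2*ρ)/2) (c k + (t - 2*ρ)/2))
        ⊆ ⋃ f ∈ T, ASet M f := by
      intro z hz
      obtain ⟨f, hf⟩ := exists_mem_ASet M hM hcov' z
      have hd : dE z (vmap M f) ≤ ρ := key1 z f hf
      have hfS : f ∈ S := by
        intro k
        have h1 : |z k - vmap M f k| ≤ ρ := abs_le_of_dE_le hd hρ k
        have h2 : z k ∈ Set.Icc (c k - (t - 2*ρ)/2) (c k + (t - 2*ρ)/2) :=
          (Set.mem_univ_pi.mp hz) k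
        rw [Set.mem_Icc] at h2 ⊢
        rw [abs_le] at h1
        constructor <;> linarith [h1.1, h1.2, h2.1, h2.2]
      have hfT : f ∈ T := by rwa [hTdef, Set.Finite.mem_toFinset]
      exact Set.mem_biUnion hfT hf
    have hvcube : volume (Set.pi Set.univ fun k => Set.Icc (c k - (t - 2*ρ)/2) (c k + (t - 2*ρ)/2))
        = ENNReal.ofReal ((t - 2*ρ)^p) := by
      rw [volume_pi_pi]
      have : ∀ k : Fin p, volume (Set.Icc (c k - (t - 2*ρ)/2) (c k + (t - 2*ρ)/2))
          = ENNReal.ofReal (t - 2*ρ) := by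
        intro k
        rw [Real.volume_Icc]
        congr 1
        ring
      rw [Finset.prod_congr rfl (fun k _ => this k), Finset.prod_const, Finset.card_univ,
        Fintype.card_fin, ← ENNReal.ofReal_pow htm]
    calc ENNReal.ofReal ((t - 2*ρ)^p) = _ := hvcube.symm
      _ ≤ volume (⋃ f ∈ T, ASet M f) := measure_mono hsub
      _ ≤ ∑ f ∈ T, volume (ASet M f) := measure_biUnion_finset_le T _
      _ = T.card • ENNReal.ofReal |G.det| := by
          rw [Finset.sum_congr rfl (fun f _ => hvol f), Finset.sum_const]
      _ = (N : ℝ≥0∞) * ENNReal.ofReal |G.det| := by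
          rw [nsmul_eq_mul, hNcard, hTdef]
  -- upper bound
  have hup : (N : ℝ≥0∞) * ENNReal.ofReal |G.det| ≤ ENNReal.ofReal ((t + 2*ρ)^p) := by
    have hdisj : (T : Set (Fin p → ℤ)).PairwiseDisjoint (fun f => ASet M f) := by
      intro f _ g _ hfg
      refine Set.disjoint_left.mpr fun z hzf hzg => hfg (ASet_disjoint M hzf hzg)
    have hsub : (⋃ f ∈ T, ASet M f)
        ⊆ Set.pi Set.univ fun k => Set.Icc (c k - (t + 2*ρ)/2) (c k + (t + 2*ρ)/2) := by
      intro z hz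
      obtain ⟨f, hfT, hzf⟩ := Set.mem_iUnion₂.mp hz
      have hfS : f ∈ S := by rwa [hTdef, Set.Finite.mem_toFinset] at hfT
      have hd : dE z (vmap M f) ≤ ρ := key1 z f hzf
      rw [Set.mem_univ_pi]
      intro k
      have h1 : |z k - vmap M f k| ≤ ρ := abs_le_of_dE_le hd hρ k
      have h2 := hfS k
      rw [Set.mem_Icc] at h2 ⊢
      rw [abs_le] at h1
      constructor <;> linarith [h1.1, h1.2, h2.1, h2.2]
    have hvcube : volume (Set.pi Set.univ fun k => Set.Icc (c k - (t + 2*ρ)/2) (c k + (t + 2*ρ)/2))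
        = ENNReal.ofReal ((t + 2*ρ)^p) := by
      rw [volume_pi_pi]
      have : ∀ k : Fin p, volume (Set.Icc (c k - (t + 2*ρ)/2) (c k + (t + 2*ρ)/2))
          = ENNReal.ofReal (t + 2*ρ) := by
        intro k
        rw [Real.volume_Icc]
        congr 1
        ring
      rw [Finset.prod_congr rfl (fun k _ => this k), Finset.prod_const, Finset.card_univ,
        Fintype.card_fin, ← ENNReal.ofReal_pow htp]
    calc (N : ℝ≥0∞) * ENNReal.ofReal |G.det|
        = ∑ f ∈ T, volume (ASet M f) := by
          rw [Finset.sum_congr rfl (fun f _ => hvol f), Finset.sum_const, nsmul_eq_mul,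
            hNcard, hTdef]
      _ = volume (⋃ f ∈ T, ASet M f) :=
          (measure_biUnion_finset hdisj (fun f _ => measurableSet_ASet M f)).symm
      _ ≤ _ := measure_mono hsub
      _ = ENNReal.ofReal ((t + 2*ρ)^p) := hvcube
  -- convert from ENNReal
  have hcast : (N : ℝ≥0∞) * ENNReal.ofReal |G.det| = ENNReal.ofReal ((N : ℝ) * |G.det|) := by
    rw [ENNReal.ofReal_mul (by positivity), ENNReal.ofReal_natCast]
  rw [hcast] at hlow hup
  constructor
  · exact (ENNReal.ofReal_le_ofReal_iff (by positivity)).mp hlow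
  · exact (ENNReal.ofReal_le_ofReal_iff (by positivity)).mp hup
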